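/- The only equivariant linear map giving an SO(3)-invariant connection on the sphere S²_r is zero: fix r ≠ 0 and set ρ = !![0, −r⁻¹; r, 0] ∈ Matrix (Fin 2) (Fin 2) ℝ (the linear isotropy representation of σ_x at the origin in canonical Darboux coordinates). Let m = Submodule.span ℝ {e₂, e₃} ⊆ ℝ³ with the cross-product bracket. If Λ : m →ₗ[ℝ] Matrix (Fin 2) (Fin 2) ℝ satisfies the equivariance condition Λ(e₁ ×ᵥ v) = ρ·Λ(v) − Λ(v)·ρ for all v ∈ m, then Λ = 0. -/

import Mathlib

noncomputable section

/-- The only linear map `Λ : m → gl(2,ℝ)` equivariant for the linear isotropy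
representation `ρ = !![0, -r⁻¹; r, 0]` of `σ_x` (where `m = span {e₂, e₃}` is
the reductive complement in `so(3) ≅ (ℝ³, ×ᵥ)`) is zero; hence the
`SO(3)`-invariant connection on `S²_r` is unique. -/
theorem so3_invariant_connection_unique
    (r : ℝ) (hr : r ≠ 0)
    (Λ : (Submodule.span ℝ {(![0, 1, 0] : Fin 3 → ℝ), (![0, 0, 1] : Fin 3 → ℝ)})
          →ₗ[ℝ] Matrix (Fin 2) (Fin 2) ℝ)
    (hΛ : ∀ (v : Fin 3 → ℝ)
        (hv : v ∈ Submodule.span ℝ {(![0, 1, 0] : Fin 3 → ℝ), (![0, 0, 1] : Fin 3 → ℝ)})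
        (hv' : crossProduct (![1, 0, 0] : Fin 3 → ℝ) v ∈
          Submodule.span ℝ {(![0, 1, 0] : Fin 3 → ℝ), (![0, 0, 1] : Fin 3 → ℝ)}),
        Λ ⟨crossProduct (![1, 0, 0] : Fin 3 → ℝ) v, hv'⟩
          = !![0, -r⁻¹; r, 0] * Λ ⟨v, hv⟩ - Λ ⟨v, hv⟩ * !![0, -r⁻¹; r, 0]) :
    Λ = 0 := by
  have he2 : (![0, 1, 0] : Fin 3 → ℝ) ∈
      Submodule.span ℝ {(![0, 1, 0] : Fin 3 → ℝ), (![0, 0, 1] : Fin 3 → ℝ)} :=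
    Submodule.subset_span (by left; rfl)
  have he3 : (![0, 0, 1] : Fin 3 → ℝ) ∈
      Submodule.span ℝ {(![0, 1, 0] : Fin 3 → ℝ), (![0, 0, 1] : Fin 3 → ℝ)} :=
    Submodule.subset_span (by right; rfl)
  have hc2 : crossProduct (![1, 0, 0] : Fin 3 → ℝ) ![0, 1, 0] = ![0, 0, 1] := by
    simp [cross_apply]
  have hc3 : crossProduct (![1, 0, 0] : Fin 3 → ℝ) ![0, 0, 1] = -![0, 1, 0] := by
    simp [cross_apply]
  have hme2 : (-![0, 1, 0] : Fin 3 → ℝ) ∈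
      Submodule.span ℝ {(![0, 1, 0] : Fin 3 → ℝ), (![0, 0, 1] : Fin 3 → ℝ)} := neg_mem he2
  set ρ : Matrix (Fin 2) (Fin 2) ℝ := !![0, -r⁻¹; r, 0] with hρ
  set A := Λ ⟨![0, 1, 0], he2⟩ with hA
  set B := Λ ⟨![0, 0, 1], he3⟩ with hB
  have h1 : B = ρ * A - A * ρ := by
    have h := hΛ ![0, 1, 0] he2 (by rw [hc2]; exact he3)
    simp only [hc2] at h
    exact h
  have h2 : -A = ρ * B - B * ρ := by
    have h := hΛ ![0, 0, 1] he3 (by rw [hc3]; exact hme2)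
    simp only [hc3] at h
    have hneg : Λ ⟨-![0, 1, 0], hme2⟩ = -A := by
      rw [hA, ← LinearMap.map_neg]
      congr 1
    rw [← h]
    rw [← hneg]
  rw [h1] at h2
  have a00 : A = !![A 0 0, A 0 1; A 1 0, A 1 1] := by
    ext i j; fin_cases i <;> fin_cases j <;> rfl
  rw [a00, hρ] at h2
  have e00 := congrFun (congrFun h2 0) 0
  have e01 := congrFun (congrFun h2 0) 1
  have e10 := congrFun (congrFun h2 1) 0
  have e11 := congrFun (congrFun h2 1) 1
  simp [Matrix.mul_apply, Fin.sum_univ_two, Matrix.sub_apply, Matrix.neg_apply] at e00 e01 e10 e11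
  field_simp at e00 e01 e10 e11
  have hr2 : r * r ≠ 0 := mul_ne_zero hr hr
  have hr3 : r * (r * r) ≠ 0 := mul_ne_zero hr hr2
  have q1 : (-A 0 0) * (r * (r * r)) = (2 * (A 1 1 - A 0 0)) * (r * (r * r)) := by
    linear_combination (r * (r * r)) * e00
  have q1' := mul_right_cancel₀ hr3 q1
  have q2 : (-A 1 1) * (r * (r * r)) = (2 * (A 0 0 - A 1 1)) * (r * (r * r)) := by
    linear_combination (r * (r * r)) * e11
  have q2' := mul_right_cancel₀ hr3 q2
  have q3 : A 0 1 * (r * r) + 2 * A 1 0 = 0 := by linear_combination e01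
  have q4 : 2 * (A 0 1 * (r * r)) + A 1 0 = 0 := by linear_combination e10
  have h10 : A 1 0 = 0 := by linarith
  have hb : A 0 1 * (r * r) = 0 := by linarith
  have h01 : A 0 1 = 0 := (mul_eq_zero.mp hb).resolve_right hr2
  have hA0 : A = 0 := by
    rw [a00]
    have h00 : A 0 0 = 0 := by linarith
    have h11 : A 1 1 = 0 := by linarith
    rw [h00, h01, h10, h11]
    ext i j; fin_cases i <;> fin_cases j <;> simp
  have hB0 : B = 0 := by rw [h1, hA0]; simp
  apply LinearMap.ext
  rintro ⟨v, hv⟩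
  have key : ∀ (w : Fin 3 → ℝ) (hw : w ∈
      Submodule.span ℝ {(![0, 1, 0] : Fin 3 → ℝ), (![0, 0, 1] : Fin 3 → ℝ)}),
      Λ ⟨w, hw⟩ = 0 := by
    intro w hw
    induction hw using Submodule.span_induction with
    | mem x hx =>
        rcases hx with h | h
        · subst h; exact hA0
        · simp only [Set.mem_singleton_iff] at h; subst h; exact hB0
    | zero => exact map_zero Λ
    | add x y hx hy ihx ihy =>
        have : (⟨x + y, _⟩ : Submodule.span ℝ {(![0, 1, 0] : Fin 3 → ℝ), (![0, 0, 1] : Fin 3 → ℝ)})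
            = ⟨x, hx⟩ + ⟨y, hy⟩ := rfl
        rw [this, map_add, ihx, ihy, add_zero]
    | smul c x hx ihx =>
        have : (⟨c • x, _⟩ : Submodule.span ℝ {(![0, 1, 0] : Fin 3 → ℝ), (![0, 0, 1] : Fin 3 → ℝ)})
            = c • ⟨x, hx⟩ := rfl
        rw [this, map_smul, ihx, smul_zero]
  simpa using key v hv
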